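/- If σ⁺ and σ⁻ are independent random variables each following the standard Gumbel distribution (CDF F(x) = exp(-exp(-x))), and π ∈ (0,1), then P(log π + σ⁺ > log(1-π) + σ⁻) = π. -/

import Mathlib

open MeasureTheory Filter

private lemma gumbel_Iio_of_Iic {ν : Measure ℝ}
    (h : ∀ x : ℝ, ν (Set.Iic x) = ENNReal.ofReal (Real.exp (-Real.exp (-x)))) (t : ℝ) :
    ν (Set.Iio t) = ENNReal.ofReal (Real.exp (-Real.exp (-t))) := by
  have hunion : Set.Iio t = ⋃ n : ℕ, Set.Iic (t - ((n:ℝ)+1)⁻¹) := by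
    ext y
    simp only [Set.mem_Iio, Set.mem_iUnion, Set.mem_Iic]
    constructor
    · intro hy
      obtain ⟨n, hn⟩ := exists_nat_one_div_lt (sub_pos.2 hy)
      exact ⟨n, by rw [one_div] at hn; linarith⟩
    · rintro ⟨n, hn⟩
      have : (0:ℝ) < ((n:ℝ)+1)⁻¹ := by positivity
      linarith
  have hmono : Monotone fun n : ℕ => Set.Iic (t - ((n:ℝ)+1)⁻¹) := by
    intro m n hmn
    apply Set.Iic_subset_Iic.2
    have h1 : ((n:ℝ)+1)⁻¹ ≤ ((m:ℝ)+1)⁻¹ := by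
      apply inv_anti₀ (by positivity)
      have : (m:ℝ) ≤ n := Nat.cast_le.2 hmn
      linarith
    linarith
  have h1 : Tendsto (fun n : ℕ => ν (Set.Iic (t - ((n:ℝ)+1)⁻¹))) atTop (nhds (ν (Set.Iio t))) := by
    have := tendsto_measure_iUnion_atTop (μ := ν) hmono
    rwa [← hunion] at this
  have h2 : Tendsto (fun n : ℕ => ν (Set.Iic (t - ((n:ℝ)+1)⁻¹))) atTop
      (nhds (ENNReal.ofReal (Real.exp (-Real.exp (-t))))) := by
    simp only [h]
    apply (ENNReal.continuous_ofReal.tendsto _).comp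
    have htend : Tendsto (fun n : ℕ => t - ((n:ℝ)+1)⁻¹) atTop (nhds t) := by
      have hi : Tendsto (fun n : ℕ => ((n:ℝ)+1)⁻¹) atTop (nhds 0) := by
        simpa using tendsto_one_div_add_atTop_nhds_zero_nat (𝕜 := ℝ)
      simpa using tendsto_const_nhds.sub hi
    have hFcont : Continuous (fun x : ℝ => Real.exp (-Real.exp (-x))) := by fun_prop
    exact (hFcont.tendsto t).comp htend
  exact tendsto_nhds_unique h1 h2

/-- Gumbel trick (binary case): if `σp, σm` are independent standard Gumbel random
variables (CDF `exp (-exp (-x))`) and `p ∈ (0,1)`, then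
`P(log p + σp > log (1-p) + σm) = p`. -/
theorem gumbel_binary_trick {Ω : Type*} [MeasureSpace Ω]
    [IsProbabilityMeasure (volume : Measure Ω)]
    (σp σm : Ω → ℝ) (hσp : Measurable σp) (hσm : Measurable σm)
    (hindep : ProbabilityTheory.IndepFun σp σm volume)
    (hcdfp : ∀ x : ℝ, volume {ω | σp ω ≤ x} = ENNReal.ofReal (Real.exp (-Real.exp (-x))))
    (hcdfm : ∀ x : ℝ, volume {ω | σm ω ≤ x} = ENNReal.ofReal (Real.exp (-Real.exp (-x))))
    (p : ℝ) (hp : p ∈ Set.Ioo (0 : ℝ) 1) :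
    volume {ω | Real.log (1 - p) + σm ω < Real.log p + σp ω} = ENNReal.ofReal p := by
  obtain ⟨hp0, hp1⟩ := hp
  have hp1' : (0:ℝ) < 1 - p := by linarith
  set a : ℝ := (1 - p) / p with ha
  have ha0 : 0 < a := div_pos hp1' hp0
  set μ : Measure ℝ := Measure.map σp volume with hμdef
  set ν : Measure ℝ := Measure.map σm volume with hνdef
  have hμIic : ∀ t : ℝ, μ (Set.Iic t) = ENNReal.ofReal (Real.exp (-Real.exp (-t))) := by
    intro t; rw [hμdef, Measure.map_apply hσp measurableSet_Iic]; exact hcdfp t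
  have hνIic : ∀ t : ℝ, ν (Set.Iic t) = ENNReal.ofReal (Real.exp (-Real.exp (-t))) := by
    intro t; rw [hνdef, Measure.map_apply hσm measurableSet_Iic]; exact hcdfm t
  have hνIio := gumbel_Iio_of_Iic hνIic
  -- the event as a preimage
  set S : Set (ℝ × ℝ) := {q : ℝ × ℝ | Real.log (1 - p) + q.2 < Real.log p + q.1} with hS
  have hSmeas : MeasurableSet S := by
    apply measurableSet_lt <;> fun_prop
  have hprod : volume {ω | Real.log (1 - p) + σm ω < Real.log p + σp ω} = (μ.prod ν) S := by
    have hmap : Measure.map (fun ω => (σp ω, σm ω)) volume = μ.prod ν :=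
      (ProbabilityTheory.indepFun_iff_map_prod_eq_prod_map_map hσp.aemeasurable
        hσm.aemeasurable).1 hindep
    rw [← hmap, Measure.map_apply (hσp.prodMk hσm) hSmeas]
    rfl
  rw [hprod, Measure.prod_apply hSmeas]
  have hslice : ∀ x : ℝ, (Prod.mk x ⁻¹' S) = Set.Iio (Real.log p + x - Real.log (1 - p)) := by
    intro x
    ext y
    simp only [hS, Set.mem_preimage, Set.mem_setOf_eq, Set.mem_Iio]
    constructor <;> intro h <;> linarith
  -- value of the inner measure
  have hinner : ∀ x : ℝ, ν (Prod.mk x ⁻¹' S) =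
      ENNReal.ofReal (Real.exp (-(a * Real.exp (-x)))) := by
    intro x
    rw [hslice x, hνIio]
    congr 2
    rw [neg_sub]
    rw [show Real.log (1 - p) - (Real.log p + x) = (Real.log (1-p) - Real.log p) + (-x) by ring]
    rw [Real.exp_add, ← Real.log_div (by linarith) (by linarith), Real.exp_log ha0]
  simp only [hinner]
  -- identify μ as pushforward of uniform on (0,1)
  set G : ℝ → ℝ := fun u => -Real.log (-Real.log u) with hG
  have hGmeas : Measurable G := by
    apply Measurable.neg
    exact Real.measurable_log.comp Real.measurable_log.neg
  have hrestr : IsProbabilityMeasure (volume.restrict (Set.Ioo (0:ℝ) 1)) := by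
    constructor
    simp [Real.volume_Ioo]
  have hμeq : μ = Measure.map G (volume.restrict (Set.Ioo (0:ℝ) 1)) := by
    have : IsProbabilityMeasure μ := by
      rw [hμdef]; exact Measure.isProbabilityMeasure_map hσp.aemeasurable
    have : IsProbabilityMeasure (Measure.map G (volume.restrict (Set.Ioo (0:ℝ) 1))) :=
      Measure.isProbabilityMeasure_map hGmeas.aemeasurable
    apply Measure.ext_of_Iic
    intro t
    rw [hμIic t, Measure.map_apply hGmeas measurableSet_Iic,
      Measure.restrict_apply (hGmeas measurableSet_Iic)]
    have hFt0 : 0 < Real.exp (-Real.exp (-t)) := Real.exp_pos _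
    have hFt1 : Real.exp (-Real.exp (-t)) < 1 := by
      rw [Real.exp_lt_one_iff]
      simpa using Real.exp_pos (-t)
    have hset : G ⁻¹' Set.Iic t ∩ Set.Ioo 0 1 = Set.Ioc 0 (Real.exp (-Real.exp (-t))) := by
      ext u
      simp only [Set.mem_inter_iff, Set.mem_preimage, Set.mem_Iic, Set.mem_Ioo, Set.mem_Ioc, hG]
      constructor
      · rintro ⟨hGu, hu0, hu1⟩
        refine ⟨hu0, ?_⟩
        have hlog : Real.log u < 0 := Real.log_neg hu0 hu1
        have h1 : -t ≤ Real.log (-Real.log u) := by linarith [neg_le.1 hGu]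
        have h2 : Real.exp (-t) ≤ -Real.log u :=
          (Real.le_log_iff_exp_le (by linarith)).1 h1
        have h3 : Real.log u ≤ -Real.exp (-t) := by linarith
        exact (Real.log_le_iff_le_exp hu0).1 h3
      · rintro ⟨hu0, hu1⟩
        have hu1' : u < 1 := lt_of_le_of_lt hu1 hFt1
        refine ⟨?_, hu0, hu1'⟩
        have hlog : Real.log u < 0 := Real.log_neg hu0 hu1'
        have h3 : Real.log u ≤ -Real.exp (-t) := (Real.log_le_iff_le_exp hu0).2 hu1
        have h2 : Real.exp (-t) ≤ -Real.log u := by linarith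
        have h1 : -t ≤ Real.log (-Real.log u) :=
          (Real.le_log_iff_exp_le (by linarith)).2 h2
        linarith [neg_le.2 h1]
    rw [hset, Real.volume_Ioc]
    norm_num
  rw [hμeq, lintegral_map (by fun_prop) hGmeas]
  -- on (0,1), the integrand is u ^ a
  have hcongr : ∀ u ∈ Set.Ioo (0:ℝ) 1,
      ENNReal.ofReal (Real.exp (-(a * Real.exp (-G u)))) = ENNReal.ofReal (u ^ a) := by
    intro u hu
    obtain ⟨hu0, hu1⟩ := hu
    have hlog : Real.log u < 0 := Real.log_neg hu0 hu1
    have h1 : Real.exp (-G u) = -Real.log u := by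
      simp only [hG, neg_neg]
      exact Real.exp_log (by linarith)
    rw [h1, Real.rpow_def_of_pos hu0]
    ring_nf
  rw [setLIntegral_congr_fun measurableSet_Ioo
    hcongr]
  -- compute the integral
  have hint : ∫⁻ u in Set.Ioo (0:ℝ) 1, ENNReal.ofReal (u ^ a) = ENNReal.ofReal p := by
    have hIoc : (∫⁻ u in Set.Ioo (0:ℝ) 1, ENNReal.ofReal (u ^ a))
        = ∫⁻ u in Set.Ioc (0:ℝ) 1, ENNReal.ofReal (u ^ a) := by
      rw [← Measure.restrict_congr_set Ioo_ae_eq_Ioc]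
    have hinteg : IntervalIntegrable (fun u : ℝ => u ^ a) volume 0 1 :=
      intervalIntegral.intervalIntegrable_rpow' (by linarith : (-1:ℝ) < a)
    have hinteg' : IntegrableOn (fun u : ℝ => u ^ a) (Set.Ioc (0:ℝ) 1) volume := by
      rw [← Set.uIoc_of_le (by norm_num : (0:ℝ) ≤ 1)]
      exact hinteg.def'
    rw [hIoc, ← ofReal_integral_eq_lintegral_ofReal hinteg'
      ((ae_restrict_iff' measurableSet_Ioc).2 (Filter.Eventually.of_forall
        fun u hu => Real.rpow_nonneg hu.1.le a))]
    congr 1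
    have : ∫ u in Set.Ioc (0:ℝ) 1, u ^ a = ∫ u in (0:ℝ)..1, u ^ a := by
      rw [intervalIntegral.integral_of_le (by norm_num : (0:ℝ) ≤ 1)]
    rw [this, integral_rpow (Or.inl (by linarith : (-1:ℝ) < a)),
      Real.one_rpow, Real.zero_rpow (by linarith)]
    rw [ha]
    field_simp
    ring
  exact hint
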